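/- Let ρ be a probability distribution on a finite set S and let ρ̂ be the empirical distribution obtained from m i.i.d. samples drawn from ρ. Then for every δ ∈ (0,1), with probability at least 1 − δ: ‖ρ − ρ̂‖₂ ≤ (2 + √(2·log(1/δ))) / √m, where ‖·‖₂ is the Euclidean norm of the vector of pointwise differences. -/

import Mathlib

open Finset

open Real

set_option linter.unusedSectionVars false

/-- The empirical distribution of `m` samples `s : Fin m → S`. -/
noncomputable def empDist {S : Type} [DecidableEq S]
    {m : ℕ} (s : Fin m → S) (a : S) : ℝ :=
  ((Finset.univ.filter fun i => s i = a).card : ℝ) / (m : ℝ)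

lemma phi_le (p : ℝ) (hp0 : 0 ≤ p) (hp1 : p ≤ 1) (u : ℝ) :
    Real.log ((1 - p) + p * Real.exp u) - p * u ≤ u ^ 2 / 8 := by
  set D : ℝ → ℝ := fun v => (1 - p) + p * Real.exp v with hDdef
  have hD : ∀ v, 0 < D v := by
    intro v
    rcases eq_or_lt_of_le hp0 with h | h
    · simp [hDdef, ← h]
    · have := mul_pos h (Real.exp_pos v)
      simp only [hDdef]; linarith
  have hDd : ∀ v, HasDerivAt D (p * Real.exp v) v := by
    intro v
    exact ((Real.hasDerivAt_exp v).const_mul p).const_add (1 - p)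
  set h : ℝ → ℝ := fun v => p * Real.exp v / D v with hhdef
  have hd1 : ∀ v, HasDerivAt (fun w => Real.log (D w)) (h v) v := by
    intro v
    exact (hDd v).log (hD v).ne'
  have hd2 : ∀ v, HasDerivAt h (p * (1 - p) * Real.exp v / (D v) ^ 2) v := by
    intro v
    have H := ((Real.hasDerivAt_exp v).const_mul p).div (hDd v) (hD v).ne'
    have : (p * Real.exp v * D v - p * Real.exp v * (p * Real.exp v)) / (D v) ^ 2
        = p * (1 - p) * Real.exp v / (D v) ^ 2 := by
      have : p * Real.exp v * D v - p * Real.exp v * (p * Real.exp v)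
          = p * (1 - p) * Real.exp v := by simp only [hDdef]; ring
      rw [this]
    rwa [this] at H
  have hbound : ∀ v, ‖p * (1 - p) * Real.exp v / (D v) ^ 2‖ ≤ 1 / 4 := by
    intro v
    have h1 : 0 ≤ p * (1 - p) * Real.exp v / (D v) ^ 2 := by
      apply div_nonneg _ (sq_nonneg _)
      have h2 : 0 ≤ p * (1 - p) := mul_nonneg hp0 (by linarith)
      have := (Real.exp_pos v).le
      positivity
    rw [Real.norm_eq_abs, abs_of_nonneg h1, div_le_iff₀ (pow_pos (hD v) 2)]
    have hsq : 0 ≤ ((1 - p) - p * Real.exp v) ^ 2 := sq_nonneg _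
    simp only [hDdef]
    nlinarith [Real.exp_pos v]
  have hLip : ∀ v : ℝ, |h v - h 0| ≤ |v| / 4 := by
    intro v
    have := Convex.norm_image_sub_le_of_norm_hasDerivWithin_le
      (f := h) (f' := fun v => p * (1 - p) * Real.exp v / (D v) ^ 2)
      (s := Set.univ) (C := 1 / 4)
      (fun x _ => (hd2 x).hasDerivWithinAt) (fun x _ => hbound x) convex_univ
      (Set.mem_univ 0) (Set.mem_univ v)
    rw [Real.norm_eq_abs, Real.norm_eq_abs, sub_zero] at this
    linarith
  have hh0 : h 0 = p := by simp [hhdef, hDdef]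
  set g : ℝ → ℝ := fun v => v ^ 2 / 8 - (Real.log (D v) - p * v) with hgdef
  have hg : ∀ v, HasDerivAt g (v / 4 - (h v - p)) v := by
    intro v
    have h1 : HasDerivAt (fun w : ℝ => w ^ 2 / 8) (v / 4) v := by
      have := (hasDerivAt_pow 2 v).div_const 8
      exact this.congr_deriv (by ring)
    have h2 : HasDerivAt (fun w => Real.log (D w) - p * w) (h v - p) v :=
      (hd1 v).sub (by simpa using (hasDerivAt_id v).const_mul p)
    exact h1.sub h2
  have hgderiv : ∀ v, deriv g v = v / 4 - (h v - p) := fun v => (hg v).deriv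
  have hgc : Continuous g := by
    have : Differentiable ℝ g := fun v => (hg v).differentiableAt
    exact this.continuous
  have hg0 : g 0 = 0 := by simp [hgdef, hDdef]
  have key : ∀ v, 0 ≤ g v := by
    intro v
    rcases le_total 0 v with hv | hv
    · have hmono : MonotoneOn g (Set.Ici 0) := by
        apply monotoneOn_of_deriv_nonneg (convex_Ici 0) hgc.continuousOn
          (fun x _ => ((hg x).differentiableAt).differentiableWithinAt)
        intro x hx
        rw [interior_Ici] at hx
        rw [hgderiv]
        have := hLip x
        rw [abs_of_pos (Set.mem_Ioi.mp hx)] at this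
        have := abs_le.1 this
        linarith [this.2, (abs_le.1 (hLip x)).2]
      have := hmono (Set.mem_Ici.2 le_rfl) (Set.mem_Ici.2 hv) hv
      rw [hg0] at this; exact this
    · have hanti : AntitoneOn g (Set.Iic 0) := by
        apply antitoneOn_of_deriv_nonpos (convex_Iic 0) hgc.continuousOn
          (fun x _ => ((hg x).differentiableAt).differentiableWithinAt)
        intro x hx
        rw [interior_Iic] at hx
        rw [hgderiv]
        have h3 := (abs_le.1 (hLip x)).1
        rw [abs_of_neg (Set.mem_Iio.mp hx)] at h3
        linarith
      have := hanti (Set.mem_Iic.2 hv) (Set.mem_Iic.2 le_rfl) hv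
      rw [hg0] at this; exact this
  have := key u
  simp only [hgdef] at this
  linarith

lemma hoeffding_discrete {S : Type} [Fintype S] (w X : S → ℝ)
    (hw0 : ∀ a, 0 ≤ w a) (hw1 : ∑ a, w a = 1)
    (hmean : ∑ a, w a * X a = 0) (c l : ℝ)
    (hrange : ∀ a b, X a - X b ≤ c) :
    ∑ a, w a * Real.exp (l * X a) ≤ Real.exp (l ^ 2 * c ^ 2 / 8) := by
  have hne : Nonempty S := by
    by_contra h
    rw [not_nonempty_iff] at h
    simp [Finset.univ_eq_empty] at hw1
  have hNE : (Finset.univ : Finset S).Nonempty := Finset.univ_nonempty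
  set lo := Finset.univ.inf' hNE X with hlo
  set hi := Finset.univ.sup' hNE X with hhi
  have hloX : ∀ a, lo ≤ X a := fun a => Finset.inf'_le X (mem_univ a)
  have hXhi : ∀ a, X a ≤ hi := fun a => Finset.le_sup' X (mem_univ a)
  have hc0 : 0 ≤ c := le_trans (by simp) (hrange (Classical.arbitrary S) (Classical.arbitrary S))
  have hhilo : hi - lo ≤ c := by
    obtain ⟨a, _, ha⟩ := Finset.exists_mem_eq_sup' hNE X
    obtain ⟨b, _, hb⟩ := Finset.exists_mem_eq_inf' hNE X
    rw [hhi, hlo, ha, hb]; exact hrange a b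
  have hlo0 : lo ≤ 0 := by
    by_contra hcon
    push_neg at hcon
    have : ∑ a, w a * lo ≤ ∑ a, w a * X a :=
      Finset.sum_le_sum fun a _ => mul_le_mul_of_nonneg_left (hloX a) (hw0 a)
    rw [hmean, ← Finset.sum_mul, hw1, one_mul] at this
    linarith
  have h0hi : 0 ≤ hi := by
    by_contra hcon
    push_neg at hcon
    have : ∑ a, w a * X a ≤ ∑ a, w a * hi :=
      Finset.sum_le_sum fun a _ => mul_le_mul_of_nonneg_left (hXhi a) (hw0 a)
    rw [hmean, ← Finset.sum_mul, hw1, one_mul] at this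
    linarith
  have main : ∑ a, w a * Real.exp (l * X a) ≤ Real.exp (l ^ 2 * (hi - lo) ^ 2 / 8) := by
    rcases eq_or_lt_of_le (le_trans hlo0 h0hi : lo ≤ hi) with heq | hlt
    · have h1 : lo = 0 := by linarith [heq ▸ h0hi]
      have h2 : hi = 0 := by rw [← heq]; exact h1
      have hX0 : ∀ a, X a = 0 := fun a =>
        le_antisymm (h2 ▸ hXhi a) (h1 ▸ hloX a)
      simp only [hX0, mul_zero, Real.exp_zero, mul_one, hw1]
      exact Real.one_le_exp (by positivity)
    · set hgap := hi - lo with hgapdef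
      have hgap0 : 0 < hgap := by rw [hgapdef]; linarith
      set p := -lo / hgap with hpdef
      have hp0 : 0 ≤ p := div_nonneg (by linarith) hgap0.le
      have hp1 : p ≤ 1 := by
        rw [hpdef, div_le_one hgap0]; rw [hgapdef]; linarith
      set e1 := Real.exp (l * lo) with he1
      set e2 := Real.exp (l * hi) with he2
      have conv : ∀ a, Real.exp (l * X a) ≤
          ((hi - X a) * e1 + (X a - lo) * e2) / hgap := by
        intro a
        have hθ : 0 ≤ (hi - X a) / hgap := div_nonneg (by linarith [hXhi a]) hgap0.le
        have hτ : 0 ≤ (X a - lo) / hgap := div_nonneg (by linarith [hloX a]) hgap0.le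
        have hsum : (hi - X a) / hgap + (X a - lo) / hgap = 1 := by
          field_simp
          try rw [hgapdef]
          try ring
        have hcv := convexOn_exp.2 (Set.mem_univ (l * lo)) (Set.mem_univ (l * hi)) hθ hτ hsum
        have harg : (hi - X a) / hgap * (l * lo) + (X a - lo) / hgap * (l * hi) = l * X a := by
          field_simp
          try rw [hgapdef]
          try ring
        rw [smul_eq_mul, smul_eq_mul, smul_eq_mul, smul_eq_mul, harg] at hcv
        calc Real.exp (l * X a) ≤ (hi - X a) / hgap * e1 + (X a - lo) / hgap * e2 := hcv
          _ = ((hi - X a) * e1 + (X a - lo) * e2) / hgap := by ring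
      have step1 : ∑ a, w a * Real.exp (l * X a) ≤ (1 - p) * e1 + p * e2 := by
        have hle : ∑ a, w a * Real.exp (l * X a)
            ≤ ∑ a, w a * (((hi - X a) * e1 + (X a - lo) * e2) / hgap) :=
          Finset.sum_le_sum fun a _ => mul_le_mul_of_nonneg_left (conv a) (hw0 a)
        have heval : ∑ a, w a * (((hi - X a) * e1 + (X a - lo) * e2) / hgap)
            = (1 - p) * e1 + p * e2 := by
          have hterm : ∀ a : S, w a * (((hi - X a) * e1 + (X a - lo) * e2) / hgap)
              = ((hi * e1 - lo * e2) / hgap) * w a + ((e2 - e1) / hgap) * (w a * X a) := by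
            intro a; field_simp; ring
          rw [Finset.sum_congr rfl fun a _ => hterm a, Finset.sum_add_distrib,
            ← Finset.mul_sum, ← Finset.mul_sum, hw1, hmean, mul_one, mul_zero, add_zero]
          have h1p : 1 - p = hi / hgap := by
            rw [hpdef, hgapdef]; field_simp; ring
          rw [h1p, hpdef]
          ring
        rw [← heval]; exact hle
      set u := l * hgap with hu
      have hDpos : 0 < (1 - p) + p * Real.exp u := by
        rcases eq_or_lt_of_le hp0 with h | h
        · simp [← h]
        · have := mul_pos h (Real.exp_pos u)
          linarith
      have hlog := phi_le p hp0 hp1 u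
      have hexp : (1 - p) + p * Real.exp u ≤ Real.exp (p * u + u ^ 2 / 8) := by
        rw [← Real.log_le_iff_le_exp hDpos]
        linarith
      have hsplit : (1 - p) * e1 + p * e2 = e1 * ((1 - p) + p * Real.exp u) := by
        have : e2 = e1 * Real.exp u := by
          rw [he1, he2, ← Real.exp_add, hu, hgapdef]; ring_nf
        rw [this]; ring
      have hzero : l * lo + p * u = 0 := by
        rw [hpdef, hu]; field_simp; ring
      calc ∑ a, w a * Real.exp (l * X a) ≤ (1 - p) * e1 + p * e2 := step1
        _ = e1 * ((1 - p) + p * Real.exp u) := hsplit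
        _ ≤ e1 * Real.exp (p * u + u ^ 2 / 8) := by
            apply mul_le_mul_of_nonneg_left hexp (Real.exp_nonneg _)
        _ = Real.exp (l * lo + (p * u + u ^ 2 / 8)) := by rw [he1, ← Real.exp_add]
        _ = Real.exp (u ^ 2 / 8) := by rw [show l * lo + (p * u + u ^ 2 / 8) = (l*lo + p*u) + u^2/8 by ring, hzero, zero_add]
        _ = Real.exp (l ^ 2 * hgap ^ 2 / 8) := by rw [hu]; ring_nf
  calc ∑ a, w a * Real.exp (l * X a) ≤ Real.exp (l ^ 2 * (hi - lo) ^ 2 / 8) := main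
    _ ≤ Real.exp (l ^ 2 * c ^ 2 / 8) := by
        apply Real.exp_le_exp.2
        have h1 : (hi - lo) ^ 2 ≤ c ^ 2 := by nlinarith
        nlinarith [sq_nonneg l]

lemma mcdiarmid_mgf {S : Type} [Fintype S] [DecidableEq S] (ρ : S → ℝ)
    (hρ0 : ∀ a, 0 ≤ ρ a) (hρ1 : ∑ a, ρ a = 1) :
    ∀ (m : ℕ) (f : (Fin m → S) → ℝ) (c l : ℝ),
    (∀ s i b, |f s - f (Function.update s i b)| ≤ c) →
    ∑ s : Fin m → S, (∏ i, ρ (s i)) *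
        Real.exp (l * (f s - ∑ v : Fin m → S, (∏ i, ρ (v i)) * f v))
      ≤ Real.exp (m * (l ^ 2 * c ^ 2 / 8)) := by
  intro m
  induction m with
  | zero =>
    intro f c l _
    simp [Fintype.sum_unique]
  | succ m ih =>
    intro f c l hbd
    set W : (Fin m → S) → ℝ := fun t => ∏ i, ρ (t i) with hW
    set F : (Fin m → S) → ℝ := fun t => ∑ a, ρ a * f (Fin.cons a t) with hF
    have hWnn : ∀ t, 0 ≤ W t := fun t => Finset.prod_nonneg fun i _ => hρ0 _
    have sumswap : ∀ g : (Fin (m + 1) → S) → ℝ,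
        ∑ s : Fin (m + 1) → S, g s = ∑ a : S, ∑ t : Fin m → S, g (Fin.cons a t) := by
      intro g
      rw [← Equiv.sum_comp (Fin.consEquiv (fun _ : Fin (m + 1) => S)) g, Fintype.sum_prod_type]
      rfl
    have Wprod : ∀ (a : S) (t : Fin m → S),
        (∏ i : Fin (m + 1), ρ ((Fin.cons a t : Fin (m + 1) → S) i)) = ρ a * W t := by
      intro a t
      rw [Fin.prod_univ_succ]
      simp [hW]
    have hmu : (∑ v : Fin (m + 1) → S, (∏ i, ρ (v i)) * f v) = ∑ t, W t * F t := by
      rw [sumswap]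
      rw [Finset.sum_comm]
      congr 1
      ext t
      rw [hF]
      simp only []
      rw [Finset.mul_sum]
      congr 1
      ext a
      rw [Wprod]
      ring
    set μ := ∑ v : Fin (m + 1) → S, (∏ i, ρ (v i)) * f v with hμdef
    have hFbd : ∀ t i b, |F t - F (Function.update t i b)| ≤ c := by
      intro t i b
      have h1 : F t - F (Function.update t i b)
          = ∑ a, ρ a * (f (Fin.cons a t) - f (Fin.cons a (Function.update t i b))) := by
        rw [hF]
        simp only []
        rw [← Finset.sum_sub_distrib]
        congr 1
        ext a
        ring
      rw [h1]
      calc |∑ a, ρ a * (f (Fin.cons a t) - f (Fin.cons a (Function.update t i b)))|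
          ≤ ∑ a, |ρ a * (f (Fin.cons a t) - f (Fin.cons a (Function.update t i b)))| :=
            Finset.abs_sum_le_sum_abs _ _
        _ ≤ ∑ a, ρ a * c := by
            apply Finset.sum_le_sum
            intro a _
            rw [abs_mul, abs_of_nonneg (hρ0 a)]
            apply mul_le_mul_of_nonneg_left _ (hρ0 a)
            rw [Fin.cons_update]
            exact hbd (Fin.cons a t) i.succ b
        _ = c := by rw [← Finset.sum_mul, hρ1, one_mul]
    have hoeff : ∀ t : Fin m → S,
        ∑ a, ρ a * Real.exp (l * (f (Fin.cons a t) - F t)) ≤ Real.exp (l ^ 2 * c ^ 2 / 8) := by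
      intro t
      apply hoeffding_discrete ρ (fun a => f (Fin.cons a t) - F t) hρ0 hρ1 _ c l
      · intro a b
        have h2 : f (Fin.cons a t) - f (Fin.cons b t)
            = f (Fin.cons a t) - f (Function.update (Fin.cons a t) 0 b) := by
          rw [Fin.update_cons_zero]
        have h3 := le_trans (le_abs_self _) (hbd (Fin.cons a t) 0 b)
        calc f (Fin.cons a t) - F t - (f (Fin.cons b t) - F t)
            = f (Fin.cons a t) - f (Fin.cons b t) := by ring
          _ ≤ c := by rw [h2]; exact h3
      · rw [hF]
        simp only [mul_sub]
        rw [Finset.sum_sub_distrib, ← Finset.sum_mul, hρ1, one_mul, sub_self]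
    calc ∑ s : Fin (m + 1) → S, (∏ i, ρ (s i)) * Real.exp (l * (f s - μ))
        = ∑ t, ∑ a, (ρ a * W t) * Real.exp (l * (f (Fin.cons a t) - μ)) := by
          rw [sumswap, Finset.sum_comm]
          congr 1; ext t; congr 1; ext a
          rw [Wprod]
      _ = ∑ t, (W t * Real.exp (l * (F t - μ))) *
            ∑ a, ρ a * Real.exp (l * (f (Fin.cons a t) - F t)) := by
          congr 1; ext t
          rw [Finset.mul_sum]
          congr 1; ext a
          rw [show l * (f (Fin.cons a t) - μ)
              = l * (F t - μ) + l * (f (Fin.cons a t) - F t) by ring, Real.exp_add]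
          ring
      _ ≤ ∑ t, (W t * Real.exp (l * (F t - μ))) * Real.exp (l ^ 2 * c ^ 2 / 8) := by
          apply Finset.sum_le_sum
          intro t _
          exact mul_le_mul_of_nonneg_left (hoeff t)
            (mul_nonneg (hWnn t) (Real.exp_nonneg _))
      _ = (∑ t, W t * Real.exp (l * (F t - μ))) * Real.exp (l ^ 2 * c ^ 2 / 8) := by
          rw [← Finset.sum_mul]
      _ ≤ Real.exp (m * (l ^ 2 * c ^ 2 / 8)) * Real.exp (l ^ 2 * c ^ 2 / 8) := by
          apply mul_le_mul_of_nonneg_right _ (Real.exp_nonneg _)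
          have := ih F c l hFbd
          rw [← hmu] at this
          exact this
      _ = Real.exp ((m + 1 : ℕ) * (l ^ 2 * c ^ 2 / 8)) := by
          rw [← Real.exp_add]
          congr 1
          push_cast
          ring

section
variable {S : Type} [Fintype S] [DecidableEq S]

lemma sum_prod_pi (m : ℕ) (G : Fin m → S → ℝ) :
    ∑ s : Fin m → S, ∏ i, G i (s i) = ∏ i, ∑ a, G i a := by
  rw [Finset.prod_univ_sum, Fintype.piFinset_univ]

lemma sum_W (ρ : S → ℝ) (hρ1 : ∑ a, ρ a = 1) (m : ℕ) :
    ∑ s : Fin m → S, ∏ i, ρ (s i) = 1 := by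
  rw [sum_prod_pi m (fun _ x => ρ x)]
  simp [hρ1]

lemma Echi (ρ : S → ℝ) (hρ1 : ∑ a, ρ a = 1) (m : ℕ) (j : Fin m) (a : S) :
    ∑ s : Fin m → S, (∏ i, ρ (s i)) * (if s j = a then (1:ℝ) else 0) = ρ a := by
  have h1 : ∀ s : Fin m → S, (∏ i, ρ (s i)) * (if s j = a then (1:ℝ) else 0)
      = ∏ i, (ρ (s i) * (if i = j then (if s i = a then (1:ℝ) else 0) else 1)) := by
    intro s
    rw [Finset.prod_mul_distrib]
    congr 1
    rw [Finset.prod_eq_single j (fun i _ hij => by simp [hij]) (by simp)]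
    simp
  rw [Finset.sum_congr rfl fun s _ => h1 s,
    sum_prod_pi m (fun i x => ρ x * (if i = j then (if x = a then (1:ℝ) else 0) else 1))]
  have h2 : ∀ i : Fin m, (∑ x, ρ x * (if i = j then (if x = a then (1:ℝ) else 0) else 1))
      = if i = j then ρ a else 1 := by
    intro i
    by_cases hij : i = j
    · simp only [hij, if_true, mul_ite, mul_one, mul_zero]
      simp [Finset.sum_ite_eq']
    · simp [hij, hρ1]
  rw [Finset.prod_congr rfl fun i _ => h2 i]
  rw [Finset.prod_eq_single j (fun i _ hij => by simp [hij]) (by simp)]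
  simp

lemma Echi2 (ρ : S → ℝ) (hρ1 : ∑ a, ρ a = 1) (m : ℕ) (j k : Fin m) (a : S) :
    ∑ s : Fin m → S, (∏ i, ρ (s i)) *
        ((if s j = a then (1:ℝ) else 0) * (if s k = a then (1:ℝ) else 0))
      = if j = k then ρ a else ρ a ^ 2 := by
  by_cases hjk : j = k
  · subst hjk
    simp only [if_true]
    have : ∀ s : Fin m → S, ((if s j = a then (1:ℝ) else 0) * (if s j = a then (1:ℝ) else 0))
        = (if s j = a then (1:ℝ) else 0) := by
      intro s; split_ifs <;> norm_num
    rw [Finset.sum_congr rfl fun s _ => by rw [this s]]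
    exact Echi ρ hρ1 m j a
  · simp only [hjk, if_false]
    have h1 : ∀ s : Fin m → S, (∏ i, ρ (s i)) *
        ((if s j = a then (1:ℝ) else 0) * (if s k = a then (1:ℝ) else 0))
        = ∏ i, (ρ (s i) * (if i = j ∨ i = k then (if s i = a then (1:ℝ) else 0) else 1)) := by
      intro s
      rw [Finset.prod_mul_distrib]
      congr 1
      rw [← Finset.mul_prod_erase Finset.univ _ (Finset.mem_univ j),
        ← Finset.mul_prod_erase _ _ (Finset.mem_erase.2 ⟨fun h => hjk h.symm, Finset.mem_univ k⟩)]
      rw [Finset.prod_eq_one (fun i hi => by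
        rw [Finset.mem_erase, Finset.mem_erase] at hi
        simp [hi.1, hi.2.1])]
      simp [hjk]
    rw [Finset.sum_congr rfl fun s _ => h1 s,
      sum_prod_pi m (fun i x => ρ x * (if i = j ∨ i = k then (if x = a then (1:ℝ) else 0) else 1))]
    have h2 : ∀ i : Fin m, (∑ x, ρ x * (if i = j ∨ i = k then (if x = a then (1:ℝ) else 0) else 1))
        = if i = j ∨ i = k then ρ a else 1 := by
      intro i
      by_cases hij : i = j ∨ i = k
      · simp only [hij, if_true, mul_ite, mul_one, mul_zero]
        simp [Finset.sum_ite_eq']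
      · simp [hij, hρ1]
    rw [Finset.prod_congr rfl fun i _ => h2 i]
    rw [← Finset.mul_prod_erase Finset.univ _ (Finset.mem_univ j),
      ← Finset.mul_prod_erase _ _ (Finset.mem_erase.2 ⟨fun h => hjk h.symm, Finset.mem_univ k⟩)]
    rw [Finset.prod_eq_one (fun i hi => by
      rw [Finset.mem_erase, Finset.mem_erase] at hi
      simp [hi.1, hi.2.1])]
    simp [hjk]
    ring

end

section
variable {S : Type} [Fintype S] [DecidableEq S]





lemma empDist_eq {m : ℕ} (s : Fin m → S) (a : S) :
    empDist s a = (∑ j, if s j = a then (1:ℝ) else 0) / m := by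
  rw [empDist, Finset.sum_boole]

lemma moment2 (ρ : S → ℝ) (hρ1 : ∑ a, ρ a = 1) (m : ℕ) (hm : 0 < m) (a : S) :
    ∑ s : Fin m → S, (∏ i, ρ (s i)) * (ρ a - empDist s a) ^ 2
      = (ρ a - ρ a ^ 2) / m := by
  have hm' : (m : ℝ) ≠ 0 := Nat.cast_ne_zero.2 hm.ne'
  have hEe : ∑ s : Fin m → S, (∏ i, ρ (s i)) * empDist s a = ρ a := by
    have h1 : ∀ s : Fin m → S, (∏ i, ρ (s i)) * empDist s a
        = (∑ j, (∏ i, ρ (s i)) * (if s j = a then (1:ℝ) else 0)) / m := by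
      intro s
      rw [empDist_eq, ← Finset.mul_sum, mul_div_assoc]
    rw [Finset.sum_congr rfl fun s _ => h1 s, ← Finset.sum_div, Finset.sum_comm]
    rw [Finset.sum_congr rfl fun j _ => Echi ρ hρ1 m j a]
    rw [Finset.sum_const, Finset.card_univ, Fintype.card_fin, nsmul_eq_mul]
    field_simp
  have hEe2 : ∑ s : Fin m → S, (∏ i, ρ (s i)) * empDist s a ^ 2
      = ((m : ℝ) * ρ a + ((m : ℝ) ^ 2 - m) * ρ a ^ 2) / (m : ℝ) ^ 2 := by
    have h1 : ∀ s : Fin m → S, (∏ i, ρ (s i)) * empDist s a ^ 2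
        = (∑ j, ∑ k, (∏ i, ρ (s i)) *
            ((if s j = a then (1:ℝ) else 0) * (if s k = a then (1:ℝ) else 0))) / (m : ℝ) ^ 2 := by
      intro s
      rw [empDist_eq, div_pow]
      have h2 : (∑ j, if s j = a then (1:ℝ) else 0) ^ 2
          = ∑ j, ∑ k, ((if s j = a then (1:ℝ) else 0) * (if s k = a then (1:ℝ) else 0)) := by
        rw [pow_two, Finset.sum_mul_sum]
      rw [h2, ← mul_div_assoc, Finset.mul_sum]
      congr 1
      exact Finset.sum_congr rfl fun j _ => Finset.mul_sum _ _ _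
    rw [Finset.sum_congr rfl fun s _ => h1 s, ← Finset.sum_div]
    have h3 : ∑ s : Fin m → S, ∑ j : Fin m, ∑ k : Fin m, (∏ i, ρ (s i)) *
          ((if s j = a then (1:ℝ) else 0) * (if s k = a then (1:ℝ) else 0))
        = ∑ j : Fin m, ∑ k : Fin m, ∑ s : Fin m → S, (∏ i, ρ (s i)) *
          ((if s j = a then (1:ℝ) else 0) * (if s k = a then (1:ℝ) else 0)) := by
      rw [Finset.sum_comm]
      exact Finset.sum_congr rfl fun j _ => Finset.sum_comm
    rw [h3]
    rw [Finset.sum_congr rfl fun j _ => Finset.sum_congr rfl fun k _ => Echi2 ρ hρ1 m j k a]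
    have h4 : ∀ j : Fin m, ∑ k : Fin m, (if j = k then ρ a else ρ a ^ 2)
        = (m : ℝ) * ρ a ^ 2 + (ρ a - ρ a ^ 2) := by
      intro j
      have h5 : ∀ k : Fin m, (if j = k then ρ a else ρ a ^ 2)
          = ρ a ^ 2 + (if j = k then ρ a - ρ a ^ 2 else 0) := by
        intro k; split_ifs <;> ring
      rw [Finset.sum_congr rfl fun k _ => h5 k, Finset.sum_add_distrib, Finset.sum_const,
        Finset.sum_ite_eq, Finset.card_univ, Fintype.card_fin, nsmul_eq_mul]
      simp
    rw [Finset.sum_congr rfl fun j _ => h4 j, Finset.sum_const, Finset.card_univ,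
      Fintype.card_fin, nsmul_eq_mul]
    field_simp
    ring
  have hsum1 : ∑ s : Fin m → S, (∏ i : Fin m, ρ (s i)) = 1 := by
    have : ∑ s : Fin m → S, ∏ i : Fin m, ρ (s i) = ∏ i : Fin m, ∑ a, ρ a := by
      rw [Finset.prod_univ_sum, Fintype.piFinset_univ]
    rw [this]; simp [hρ1]
  have expand : ∀ s : Fin m → S, (∏ i, ρ (s i)) * (ρ a - empDist s a) ^ 2
      = ρ a ^ 2 * (∏ i, ρ (s i)) - 2 * ρ a * ((∏ i, ρ (s i)) * empDist s a)
        + (∏ i, ρ (s i)) * empDist s a ^ 2 := by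
    intro s; ring
  rw [Finset.sum_congr rfl fun s _ => expand s]
  rw [Finset.sum_add_distrib, Finset.sum_sub_distrib, ← Finset.mul_sum, ← Finset.mul_sum,
    hsum1, hEe, hEe2, mul_one]
  field_simp
  ring

lemma sqrt_sum_sq_sub (x y : S → ℝ) :
    |Real.sqrt (∑ a, x a ^ 2) - Real.sqrt (∑ a, y a ^ 2)|
      ≤ Real.sqrt (∑ a, (x a - y a) ^ 2) := by
  let u : EuclideanSpace ℝ S := (WithLp.equiv 2 (S → ℝ)).symm x
  let v : EuclideanSpace ℝ S := (WithLp.equiv 2 (S → ℝ)).symm y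
  have hu : ‖u‖ = Real.sqrt (∑ a, x a ^ 2) := by
    rw [EuclideanSpace.norm_eq]
    congr 1
    exact Finset.sum_congr rfl fun a _ => by simp [u, Real.norm_eq_abs, sq_abs]
  have hv : ‖v‖ = Real.sqrt (∑ a, y a ^ 2) := by
    rw [EuclideanSpace.norm_eq]
    congr 1
    exact Finset.sum_congr rfl fun a _ => by simp [v, Real.norm_eq_abs, sq_abs]
  have huv : ‖u - v‖ = Real.sqrt (∑ a, (x a - y a) ^ 2) := by
    rw [EuclideanSpace.norm_eq]
    congr 1
    refine Finset.sum_congr rfl fun a _ => ?_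
    have : (u - v) a = x a - y a := rfl
    rw [this, Real.norm_eq_abs, sq_abs]
  rw [← hu, ← hv, ← huv]
  exact abs_norm_sub_norm_le u v

lemma empDist_update {m : ℕ} (hm : 0 < m) (s : Fin m → S) (i : Fin m) (b : S) (a : S) :
    empDist (Function.update s i b) a - empDist s a
      = ((if b = a then (1:ℝ) else 0) - (if s i = a then (1:ℝ) else 0)) / m := by
  rw [empDist_eq, empDist_eq, div_sub_div_same]
  congr 1
  rw [← Finset.sum_sub_distrib]
  rw [Finset.sum_eq_single i (fun j _ hji => by
    rw [Function.update_of_ne hji, sub_self]) (by simp)]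
  rw [Function.update_self]

lemma f_bounded_diff (ρ : S → ℝ) {m : ℕ} (hm : 0 < m)
    (s : Fin m → S) (i : Fin m) (b : S) :
    |Real.sqrt (∑ a, (ρ a - empDist s a) ^ 2)
      - Real.sqrt (∑ a, (ρ a - empDist (Function.update s i b) a) ^ 2)|
      ≤ Real.sqrt 2 / m := by
  have hm' : (0:ℝ) < m := Nat.cast_pos.2 hm
  calc |Real.sqrt (∑ a, (ρ a - empDist s a) ^ 2)
      - Real.sqrt (∑ a, (ρ a - empDist (Function.update s i b) a) ^ 2)|
      ≤ Real.sqrt (∑ a, ((ρ a - empDist s a) - (ρ a - empDist (Function.update s i b) a)) ^ 2) :=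
        sqrt_sum_sq_sub _ _
    _ ≤ Real.sqrt 2 / m := by
        have h1 : ∀ a : S, ((ρ a - empDist s a) - (ρ a - empDist (Function.update s i b) a)) ^ 2
            = (((if b = a then (1:ℝ) else 0) - (if s i = a then (1:ℝ) else 0)) / m) ^ 2 := by
          intro a
          rw [← empDist_update hm s i b a]
          ring
        rw [Finset.sum_congr rfl fun a _ => h1 a]
        have h2 : ∑ a : S, (((if b = a then (1:ℝ) else 0) - (if s i = a then (1:ℝ) else 0)) / m) ^ 2
            ≤ 2 / (m:ℝ) ^ 2 := by
          have h3 : ∀ a : S, (((if b = a then (1:ℝ) else 0) - (if s i = a then (1:ℝ) else 0)) / m) ^ 2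
              = ((if b = a then (1:ℝ) else 0) - (if s i = a then (1:ℝ) else 0)) ^ 2 / (m:ℝ) ^ 2 := by
            intro a; rw [div_pow]
          rw [Finset.sum_congr rfl fun a _ => h3 a, ← Finset.sum_div]
          gcongr ?x / _
          have h4 : ∀ a : S, ((if b = a then (1:ℝ) else 0) - (if s i = a then (1:ℝ) else 0)) ^ 2
              ≤ (if b = a then (1:ℝ) else 0) + (if s i = a then (1:ℝ) else 0) := by
            intro a; split_ifs <;> norm_num
          calc ∑ a : S, ((if b = a then (1:ℝ) else 0) - (if s i = a then (1:ℝ) else 0)) ^ 2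
              ≤ ∑ a : S, ((if b = a then (1:ℝ) else 0) + (if s i = a then (1:ℝ) else 0)) :=
                Finset.sum_le_sum fun a _ => h4 a
            _ = 2 := by
                rw [Finset.sum_add_distrib]
                have e1 : ∑ a : S, (if b = a then (1:ℝ) else 0) = 1 := by
                  simp [Finset.sum_ite_eq]
                have e2 : ∑ a : S, (if s i = a then (1:ℝ) else 0) = 1 := by
                  simp [Finset.sum_ite_eq]
                rw [e1, e2]; norm_num
        calc Real.sqrt (∑ a : S, (((if b = a then (1:ℝ) else 0) - (if s i = a then (1:ℝ) else 0)) / m) ^ 2)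
            ≤ Real.sqrt (2 / (m:ℝ) ^ 2) := Real.sqrt_le_sqrt h2
          _ = Real.sqrt 2 / m := by
              rw [Real.sqrt_div (by norm_num : (0:ℝ) ≤ 2), Real.sqrt_sq hm'.le]

/-- for a distribution `ρ` on a finite set and the empirical
distribution `ρ̂` from `m` i.i.d. samples, for every `δ ∈ (0,1)`, with
probability at least `1 − δ`, `‖ρ − ρ̂‖₂ ≤ (2 + √(2·log(1/δ)))/√m`. -/
theorem stmt_11 {S : Type} [Fintype S] [DecidableEq S]
    (ρ : S → ℝ) (hρ0 : ∀ a, 0 ≤ ρ a) (hρ1 : (∑ a, ρ a) = 1)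
    (m : ℕ) (hm : 0 < m) (δ : ℝ) (hδ0 : 0 < δ) (hδ1 : δ < 1) :
    1 - δ ≤ ∑ s : Fin m → S,
      (if Real.sqrt (∑ a, (ρ a - empDist s a) ^ 2) ≤
          (2 + Real.sqrt (2 * Real.log (1 / δ))) / Real.sqrt (m : ℝ)
        then ∏ i, ρ (s i) else 0) := by
  have hm' : (0:ℝ) < m := Nat.cast_pos.2 hm
  have hsm : 0 < Real.sqrt m := Real.sqrt_pos.2 hm'
  set W : (Fin m → S) → ℝ := fun s => ∏ i, ρ (s i) with hW
  set f : (Fin m → S) → ℝ := fun s => Real.sqrt (∑ a, (ρ a - empDist s a) ^ 2) with hf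
  set T : ℝ := (2 + Real.sqrt (2 * Real.log (1 / δ))) / Real.sqrt (m : ℝ) with hT
  set L : ℝ := Real.log (1 / δ) with hL
  set u : ℝ := Real.sqrt (2 * L) with hu
  have hWnn : ∀ s, 0 ≤ W s := fun s => Finset.prod_nonneg fun i _ => hρ0 _
  have hsumW : ∑ s : Fin m → S, W s = 1 := sum_W ρ hρ1 m
  set μ : ℝ := ∑ s : Fin m → S, W s * f s with hμ
  have hgnn : ∀ s : Fin m → S, 0 ≤ ∑ a, (ρ a - empDist s a) ^ 2 :=
    fun s => Finset.sum_nonneg fun a _ => sq_nonneg _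
  have hfnn : ∀ s, 0 ≤ f s := fun s => Real.sqrt_nonneg _
  have hμnn : 0 ≤ μ := Finset.sum_nonneg fun s _ => mul_nonneg (hWnn s) (hfnn s)
  -- second moment bound
  have hEg : ∑ s : Fin m → S, W s * (∑ a, (ρ a - empDist s a) ^ 2) ≤ 1 / m := by
    have h1 : ∀ s : Fin m → S, W s * (∑ a, (ρ a - empDist s a) ^ 2)
        = ∑ a, W s * (ρ a - empDist s a) ^ 2 := fun s => Finset.mul_sum _ _ _
    rw [Finset.sum_congr rfl fun s _ => h1 s, Finset.sum_comm]
    rw [Finset.sum_congr rfl fun a _ => moment2 ρ hρ1 m hm a]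
    calc ∑ a, (ρ a - ρ a ^ 2) / (m:ℝ) ≤ ∑ a, ρ a / (m:ℝ) := by
          apply Finset.sum_le_sum
          intro a _
          gcongr ?x / _
          nlinarith [sq_nonneg (ρ a)]
      _ = 1 / m := by rw [← Finset.sum_div, hρ1]
  -- first moment bound
  have hμle : μ ≤ 1 / Real.sqrt m := by
    have hCS := Finset.sum_mul_sq_le_sq_mul_sq Finset.univ
      (fun s : Fin m → S => Real.sqrt (W s))
      (fun s : Fin m → S => Real.sqrt (W s) * Real.sqrt (∑ a, (ρ a - empDist s a) ^ 2))
    have e1 : ∀ s : Fin m → S,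
        Real.sqrt (W s) * (Real.sqrt (W s) * Real.sqrt (∑ a, (ρ a - empDist s a) ^ 2))
          = W s * f s := by
      intro s
      rw [← mul_assoc, Real.mul_self_sqrt (hWnn s)]
    have e2 : ∀ s : Fin m → S, Real.sqrt (W s) ^ 2 = W s := fun s => Real.sq_sqrt (hWnn s)
    have e3 : ∀ s : Fin m → S,
        (Real.sqrt (W s) * Real.sqrt (∑ a, (ρ a - empDist s a) ^ 2)) ^ 2
          = W s * (∑ a, (ρ a - empDist s a) ^ 2) := by
      intro s
      rw [mul_pow, Real.sq_sqrt (hWnn s), Real.sq_sqrt (hgnn s)]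
    rw [Finset.sum_congr rfl fun s _ => e1 s, Finset.sum_congr rfl fun s _ => e2 s,
      Finset.sum_congr rfl fun s _ => e3 s, hsumW, one_mul] at hCS
    calc μ = Real.sqrt (μ ^ 2) := (Real.sqrt_sq hμnn).symm
      _ ≤ Real.sqrt (1 / m) := Real.sqrt_le_sqrt (le_trans hCS hEg)
      _ = 1 / Real.sqrt m := by rw [one_div, one_div, Real.sqrt_inv]
  have hL0 : 0 ≤ L := Real.log_nonneg (by rw [le_div_iff₀ hδ0]; linarith)
  have hu0 : 0 ≤ u := Real.sqrt_nonneg _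
  have hTμ : (1 + u) / Real.sqrt m ≤ T - μ := by
    have h5 : (2 + u) / Real.sqrt m - 1 / Real.sqrt m = (1 + u) / Real.sqrt m := by
      rw [div_sub_div_same]; ring_nf
    rw [hT]
    linarith
  have hTμ0 : 0 ≤ T - μ := le_trans (by positivity) hTμ
  set l : ℝ := 2 * m * (T - μ) with hl
  have hl0 : 0 ≤ l := by
    apply mul_nonneg (by positivity) hTμ0
  have hbd : ∀ (s : Fin m → S) (i : Fin m) (b : S),
      |f s - f (Function.update s i b)| ≤ Real.sqrt 2 / m :=
    fun s i b => f_bounded_diff ρ hm s i b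
  have hmgf := mcdiarmid_mgf ρ hρ0 hρ1 m f (Real.sqrt 2 / m) l hbd
  -- identify μ inside hmgf
  rw [show (∑ v : Fin m → S, (∏ i, ρ (v i)) * f v) = μ from rfl] at hmgf
  -- the tail sum
  set Q : ℝ := ∑ s : Fin m → S, (if ¬ (f s ≤ T) then W s else 0) with hQ
  have hsplit : (∑ s : Fin m → S, (if f s ≤ T then W s else 0)) + Q = 1 := by
    rw [hQ, ← Finset.sum_add_distrib]
    rw [Finset.sum_congr rfl (fun s _ => by
      by_cases h : f s ≤ T <;> simp [h] : ∀ s ∈ Finset.univ,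
        ((if f s ≤ T then W s else 0) + if ¬f s ≤ T then W s else 0) = W s)]
    exact hsumW
  suffices hQδ : Q ≤ δ by linarith
  have stepA : Q ≤ (∑ s : Fin m → S, W s * Real.exp (l * (f s - μ))) *
      Real.exp (-(l * (T - μ))) := by
    rw [hQ, Finset.sum_mul]
    apply Finset.sum_le_sum
    intro s _
    by_cases h : f s ≤ T
    · rw [if_neg (not_not_intro h)]
      exact mul_nonneg (mul_nonneg (hWnn s) (Real.exp_nonneg _)) (Real.exp_nonneg _)
    · rw [if_pos h]
      have hinner : 1 ≤ Real.exp (l * (f s - μ)) * Real.exp (-(l * (T - μ))) := by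
        rw [← Real.exp_add]
        apply Real.one_le_exp
        push_neg at h
        have : l * (f s - μ) + -(l * (T - μ)) = l * (f s - T) := by ring
        rw [this]
        exact mul_nonneg hl0 (by linarith)
      calc W s = W s * 1 := (mul_one _).symm
        _ ≤ W s * (Real.exp (l * (f s - μ)) * Real.exp (-(l * (T - μ)))) :=
            mul_le_mul_of_nonneg_left hinner (hWnn s)
        _ = W s * Real.exp (l * (f s - μ)) * Real.exp (-(l * (T - μ))) := by ring
  have stepB : Q ≤ Real.exp ((m:ℝ) * (l ^ 2 * (Real.sqrt 2 / m) ^ 2 / 8)) *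
      Real.exp (-(l * (T - μ))) :=
    le_trans stepA (mul_le_mul_of_nonneg_right hmgf (Real.exp_nonneg _))
  have hexp_eq : (m:ℝ) * (l ^ 2 * (Real.sqrt 2 / m) ^ 2 / 8) + -(l * (T - μ))
      = -((m:ℝ) * (T - μ) ^ 2) := by
    rw [hl, div_pow, Real.sq_sqrt (by norm_num : (0:ℝ) ≤ 2)]
    field_simp
    ring
  have stepC : Q ≤ Real.exp (-((m:ℝ) * (T - μ) ^ 2)) := by
    rw [← hexp_eq, Real.exp_add]
    exact stepB
  have h6 : 2 * L ≤ (m:ℝ) * (T - μ) ^ 2 := by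
    have h7 : ((1 + u) / Real.sqrt m) ^ 2 ≤ (T - μ) ^ 2 :=
      pow_le_pow_left₀ (by positivity) hTμ 2
    have h8 : (m:ℝ) * ((1 + u) / Real.sqrt m) ^ 2 = (1 + u) ^ 2 := by
      rw [div_pow, Real.sq_sqrt hm'.le]
      field_simp
    have h9 : u ^ 2 = 2 * L := Real.sq_sqrt (by linarith)
    nlinarith [mul_le_mul_of_nonneg_left h7 hm'.le]
  calc Q ≤ Real.exp (-((m:ℝ) * (T - μ) ^ 2)) := stepC
    _ ≤ Real.exp (-L) := by
        apply Real.exp_le_exp.2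
        linarith
    _ = δ := by rw [hL, one_div, Real.log_inv, neg_neg, Real.exp_log hδ0]
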